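/- arXiv:1807.00402 — 2 statements merged into one kernel-verified Lean document; each statement's English description precedes it below -/
import Mathlib

section
/- Let (n_k)_{k≥1} be a strictly increasing sequence of positive integers, T ≥ 2 an integer, s > 1 and α ∈ (0,1) real, θ := (3 ln(3/2) − 1)/2, and suppose m_k = ⌈(n_k/θ) ln(ζ(s) n_k^{s+1}/α)⌉ for all k = 1,…,T. Then the random variable U_T := Σ_{k=2}^T B_k, where the B_k are independent binomial random variables with B_k ∼ Bin(m_k, (n_k − n_{k-1})/n_k), satisfies Var(U_T) < E(U_T) ≤ m_T + n_T − m_1; equivalently, Σ_{k=2}^T m_k ((n_k − n_{k-1})/n_k)(n_{k-1}/n_k) < Σ_{k=2}^T m_k (n_k − n_{k-1})/n_k ≤ m_T + n_T − m_1. -/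
open Real

noncomputable section

/-- The constant `θ = (3 ln(3/2) − 1)/2`. -/
def theta : ℝ := (3 * Real.log (3 / 2) - 1) / 2

/-- The Riemann zeta function of a real argument `s`, as the series `∑_{k≥1} k^{-s}`. -/
def zetaR (s : ℝ) : ℝ := ∑' k : ℕ, 1 / ((k : ℝ) + 1) ^ s

lemma theta_pos : 0 < theta := by
  have h := Real.log_lt_sub_one_of_pos (x := 2/3) (by norm_num) (by norm_num)
  have h2 : Real.log (3/2) = - Real.log (2/3) := by
    rw [← Real.log_inv]; norm_num
  unfold theta
  rw [h2]; linarith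

lemma zetaR_ge_one {s : ℝ} (hs : 1 < s) : 1 ≤ zetaR s := by
  have hsum : Summable (fun k : ℕ => 1 / ((k : ℝ) + 1) ^ s) := by
    have h := (Real.summable_one_div_nat_rpow (p := s)).mpr hs
    have := (summable_nat_add_iff 1).mpr h
    convert this using 2 with k
    · rfl
    · rw [Nat.cast_add, Nat.cast_one]
  have h0 := Summable.le_tsum hsum 0 (fun j _ => by positivity)
  have h1 : (1:ℝ) / (((0:ℕ):ℝ) + 1) ^ s = 1 := by
    norm_num [Real.one_rpow]
  rw [h1] at h0
  rw [zetaR]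
  exact h0

lemma tele (g : ℕ → ℝ) (T : ℕ) (hT : 2 ≤ T) :
    ∑ k ∈ Finset.Icc 2 T, (g k - g (k - 1)) = g T - g 1 := by
  induction T, hT using Nat.le_induction with
  | base => simp
  | succ n hn ih =>
      rw [Finset.sum_Icc_succ_top (by omega), ih]
      simp only [Nat.add_sub_cancel]
      ring

/-- **Lemma 4.2**: bounds on the mean and variance of `U_T = Σ_{k=2}^T B_k`, where the `B_k`
are independent binomial random variables with `B_k ∼ Bin(m_k, (n_k − n_{k-1})/n_k)`.
Since `E(U_T) = Σ_{k=2}^T m_k (n_k − n_{k-1})/n_k` and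
`Var(U_T) = Σ_{k=2}^T m_k ((n_k − n_{k-1})/n_k)(n_{k-1}/n_k)`, the claim
`Var(U_T) < E(U_T) ≤ m_T + n_T − m_1` amounts to the stated arithmetic inequalities. -/
theorem binomial_surplus_bounds (nseq : ℕ → ℕ) (hpos : ∀ k, 1 ≤ nseq k)
    (hmono : StrictMono nseq)
    (T : ℕ) (hT : 2 ≤ T) (s α : ℝ) (hs : 1 < s) (hα : α ∈ Set.Ioo (0 : ℝ) 1)
    (mseq : ℕ → ℕ)
    (hm : ∀ k, 1 ≤ k → k ≤ T →
      mseq k = ⌈((nseq k : ℝ) / theta) * Real.log (zetaR s * (nseq k : ℝ) ^ (s + 1) / α)⌉₊) :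
    (∑ k ∈ Finset.Icc 2 T, (mseq k : ℝ) * (((nseq k : ℝ) - (nseq (k - 1) : ℝ)) / (nseq k : ℝ))
          * ((nseq (k - 1) : ℝ) / (nseq k : ℝ)))
      < (∑ k ∈ Finset.Icc 2 T,
          (mseq k : ℝ) * (((nseq k : ℝ) - (nseq (k - 1) : ℝ)) / (nseq k : ℝ))) ∧
    (∑ k ∈ Finset.Icc 2 T,
        (mseq k : ℝ) * (((nseq k : ℝ) - (nseq (k - 1) : ℝ)) / (nseq k : ℝ)))
      ≤ (mseq T : ℝ) + (nseq T : ℝ) - (mseq 1 : ℝ) := by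
  obtain ⟨hα0, hα1⟩ := hα
  have hθ := theta_pos
  have hz := zetaR_ge_one hs
  have hn1 : ∀ k, (1 : ℝ) ≤ (nseq k : ℝ) := fun k => by exact_mod_cast hpos k
  have hn0 : ∀ k, (0 : ℝ) < (nseq k : ℝ) := fun k => lt_of_lt_of_le one_pos (hn1 k)
  -- argument of log is > 1
  have harg : ∀ k, 1 < zetaR s * (nseq k : ℝ) ^ (s + 1) / α := by
    intro k
    have hr : (1 : ℝ) ≤ (nseq k : ℝ) ^ (s + 1) :=
      Real.one_le_rpow (hn1 k) (by linarith)
    have : (1 : ℝ) ≤ zetaR s * (nseq k : ℝ) ^ (s + 1) := by nlinarith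
    rw [lt_div_iff₀ hα0]; nlinarith
  have hLpos : ∀ k, 0 < Real.log (zetaR s * (nseq k : ℝ) ^ (s + 1) / α) :=
    fun k => Real.log_pos (harg k)
  have hLmono : ∀ a b : ℕ, a ≤ b →
      Real.log (zetaR s * (nseq a : ℝ) ^ (s + 1) / α)
        ≤ Real.log (zetaR s * (nseq b : ℝ) ^ (s + 1) / α) := by
    intro a b hab
    have hzpos : (0:ℝ) < zetaR s := by linarith
    have hble : (nseq a : ℝ) ≤ (nseq b : ℝ) := by exact_mod_cast hmono.monotone hab
    have hr := Real.rpow_le_rpow (le_of_lt (hn0 a)) hble (by linarith : (0:ℝ) ≤ s + 1)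
    have hmul : zetaR s * (nseq a:ℝ) ^ (s+1) ≤ zetaR s * (nseq b:ℝ) ^ (s+1) :=
      mul_le_mul_of_nonneg_left hr (le_of_lt hzpos)
    exact Real.log_le_log
      (div_pos (mul_pos hzpos (Real.rpow_pos_of_pos (hn0 a) _)) hα0)
      ((div_le_div_iff_of_pos_right hα0).mpr hmul)
  set L : ℕ → ℝ := fun k => Real.log (zetaR s * (nseq k : ℝ) ^ (s + 1) / α) with hL
  have hm1 : ∀ k, 1 ≤ k → k ≤ T → (1 : ℝ) ≤ (mseq k : ℝ) := by
    intro k h1 h2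
    have : 1 ≤ mseq k := by
      rw [hm k h1 h2]
      rw [Nat.one_le_iff_ne_zero, ← Nat.pos_iff_ne_zero, Nat.ceil_pos]
      exact mul_pos (div_pos (hn0 k) hθ) (hLpos k)
    exact_mod_cast this
  have hlow : ∀ k, 1 ≤ k → k ≤ T → ((nseq k : ℝ) / theta) * L k ≤ (mseq k : ℝ) := by
    intro k h1 h2; rw [hm k h1 h2]; exact Nat.le_ceil _
  have hup : ∀ k, 1 ≤ k → k ≤ T → (mseq k : ℝ) < ((nseq k : ℝ) / theta) * L k + 1 := by
    intro k h1 h2; rw [hm k h1 h2]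
    exact Nat.ceil_lt_add_one (le_of_lt (mul_pos (div_pos (hn0 k) hθ) (hLpos k)))
  constructor
  · apply Finset.sum_lt_sum_of_nonempty
    · exact ⟨2, by simp [hT]⟩
    · intro k hk
      simp only [Finset.mem_Icc] at hk
      have hklt : nseq (k - 1) < nseq k := hmono (by omega)
      have hfrac : (nseq (k-1) : ℝ) / (nseq k : ℝ) < 1 := by
        rw [div_lt_one (hn0 k)]; exact_mod_cast hklt
      have hpospart : 0 < (mseq k : ℝ) * (((nseq k : ℝ) - (nseq (k - 1) : ℝ)) / (nseq k : ℝ)) := by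
        apply mul_pos
        · linarith [hm1 k (by omega) hk.2]
        · apply div_pos _ (hn0 k)
          have : (nseq (k-1) : ℝ) < (nseq k : ℝ) := by exact_mod_cast hklt
          linarith
      calc (mseq k : ℝ) * (((nseq k : ℝ) - (nseq (k - 1) : ℝ)) / (nseq k : ℝ))
            * ((nseq (k - 1) : ℝ) / (nseq k : ℝ))
          < (mseq k : ℝ) * (((nseq k : ℝ) - (nseq (k - 1) : ℝ)) / (nseq k : ℝ)) * 1 := by
            exact mul_lt_mul_of_pos_left hfrac hpospart
        _ = _ := by ring
  · have hterm : ∀ k ∈ Finset.Icc 2 T,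
        (mseq k : ℝ) * (((nseq k : ℝ) - (nseq (k - 1) : ℝ)) / (nseq k : ℝ))
          ≤ (fun j => (mseq j : ℝ) + (nseq j : ℝ)) k
            - (fun j => (mseq j : ℝ) + (nseq j : ℝ)) (k - 1) := by
      intro k hk
      simp only [Finset.mem_Icc] at hk
      have h1k : 1 ≤ k - 1 := by omega
      have h2k : k - 1 ≤ T := by omega
      have hklt : nseq (k - 1) < nseq k := hmono (by omega)
      have hkltR : (nseq (k - 1) : ℝ) + 1 ≤ (nseq k : ℝ) := by exact_mod_cast hklt
      -- key: m_{k-1} ≤ m_k * n_{k-1}/n_k + (n_k - n_{k-1})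
      have hkey : (mseq (k - 1) : ℝ) ≤ (mseq k : ℝ) * ((nseq (k-1) : ℝ) / (nseq k : ℝ))
          + ((nseq k : ℝ) - (nseq (k - 1) : ℝ)) := by
        have h1 := hup (k - 1) h1k h2k
        have h2 := hlow k (by omega) hk.2
        have h3 := hLmono (k - 1) k (by omega)
        have h4 : ((nseq (k-1) : ℝ) / theta) * L (k - 1)
            ≤ ((nseq (k-1) : ℝ) / theta) * L k := by
          apply mul_le_mul_of_nonneg_left h3 (by positivity)
        have hnkne : (nseq k : ℝ) ≠ 0 := ne_of_gt (hn0 k)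
        have hθne : theta ≠ 0 := ne_of_gt hθ
        have h5 : ((nseq (k-1) : ℝ) / theta) * L k
            ≤ (mseq k : ℝ) * ((nseq (k-1) : ℝ) / (nseq k : ℝ)) := by
          have e : ((nseq k : ℝ) / theta) * L k * ((nseq (k-1) : ℝ) / (nseq k : ℝ))
              = ((nseq (k-1) : ℝ) / theta) * L k := by
            field_simp
          rw [← e]
          exact mul_le_mul_of_nonneg_right h2 (by positivity)
        linarith
      have hnk := hn0 k
      have heq : (mseq k : ℝ) * (((nseq k : ℝ) - (nseq (k - 1) : ℝ)) / (nseq k : ℝ))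
          = (mseq k : ℝ) - (mseq k : ℝ) * ((nseq (k-1) : ℝ) / (nseq k : ℝ)) := by
        field_simp
      simp only []
      rw [heq]; linarith
    calc (∑ k ∈ Finset.Icc 2 T,
          (mseq k : ℝ) * (((nseq k : ℝ) - (nseq (k - 1) : ℝ)) / (nseq k : ℝ)))
        ≤ ∑ k ∈ Finset.Icc 2 T, ((fun j => (mseq j : ℝ) + (nseq j : ℝ)) k
            - (fun j => (mseq j : ℝ) + (nseq j : ℝ)) (k - 1)) :=
          Finset.sum_le_sum hterm
      _ = ((mseq T : ℝ) + (nseq T : ℝ)) - ((mseq 1 : ℝ) + (nseq 1 : ℝ)) :=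
          tele (fun j => (mseq j : ℝ) + (nseq j : ℝ)) T hT
      _ ≤ (mseq T : ℝ) + (nseq T : ℝ) - (mseq 1 : ℝ) := by
          have := hn1 1; linarith
end
end

section
/- Let x^1,…,x^m ∈ X be points such that the norm equivalence (1/2)‖v‖² ≤ ‖v‖_m² ≤ (3/2)‖v‖² holds for all v ∈ V (equivalently |||G − I||| ≤ 1/2). Then for every function u with ‖√w · u‖_{L^∞} < +∞, the weighted least-squares estimator satisfies ‖u − u_W‖ ≤ (1 + √2) e_{n,∞,w}(u). -/
open MeasureTheory Real

noncomputable section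

/-- The weight function `w(x) = n / ∑_{i<n} ψ_i(x)²`. -/
def wfun {α : Type*} (n : ℕ) (ψ : ℕ → α → ℝ) (x : α) : ℝ :=
  (n : ℝ) / ∑ i ∈ Finset.range n, ψ i x ^ 2

/-- The squared discrete (weighted, empirical) seminorm `‖f‖_m²`. -/
def discNormSq {α : Type*} (n m : ℕ) (ψ : ℕ → α → ℝ) (xs : Fin m → α) (f : α → ℝ) : ℝ :=
  (1 / (m : ℝ)) * ∑ j : Fin m, wfun n ψ (xs j) * f (xs j) ^ 2

/-- The `L²(X,ρ)` norm of `f`. -/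
def l2Norm {α : Type*} [MeasurableSpace α] (ρ : Measure α) (f : α → ℝ) : ℝ :=
  Real.sqrt (∫ x, f x ^ 2 ∂ρ)

/-- The weighted `L^∞` best-approximation error
`e_{n,∞,w}(u) = inf_{v ∈ V} sup_{y ∈ X} √(w(y)) |u(y) − v(y)|`. -/
def bestEInfW {α : Type*} (n : ℕ) (ψ : ℕ → α → ℝ) (u : α → ℝ) : ℝ :=
  ⨅ c : Fin n → ℝ, ⨆ y, Real.sqrt (wfun n ψ y) * |u y - ∑ i : Fin n, c i * ψ i y|

section Aux
variable {α : Type*} [MeasurableSpace α] {μ : Measure α}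

lemma integrable_mul_of_sq {f g : α → ℝ}
    (hfm : AEStronglyMeasurable f μ) (hgm : AEStronglyMeasurable g μ)
    (hf : Integrable (fun x => f x ^ 2) μ) (hg : Integrable (fun x => g x ^ 2) μ) :
    Integrable (fun x => f x * g x) μ := by
  have hsum : Integrable (fun x => f x ^ 2 + g x ^ 2) μ := hf.add hg
  refine hsum.mono (hfm.mul hgm) (Filter.Eventually.of_forall fun x => ?_)
  simp only [norm_mul, Real.norm_eq_abs]
  rw [abs_of_nonneg (by positivity : (0:ℝ) ≤ f x ^ 2 + g x ^ 2)]
  nlinarith [sq_nonneg (|f x| - |g x|), sq_abs (f x), sq_abs (g x)]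

lemma integral_cs {f g : α → ℝ}
    (hfm : AEStronglyMeasurable f μ) (hgm : AEStronglyMeasurable g μ)
    (hf : Integrable (fun x => f x ^ 2) μ) (hg : Integrable (fun x => g x ^ 2) μ) :
    ∫ x, f x * g x ∂μ ≤ Real.sqrt (∫ x, f x ^ 2 ∂μ) * Real.sqrt (∫ x, g x ^ 2 ∂μ) := by
  set A := ∫ x, f x ^ 2 ∂μ with hA
  set C := ∫ x, g x ^ 2 ∂μ with hC
  set B := ∫ x, f x * g x ∂μ with hB
  have hfg := integrable_mul_of_sq hfm hgm hf hg
  have hA0 : 0 ≤ A := integral_nonneg fun x => sq_nonneg _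
  have hC0 : 0 ≤ C := integral_nonneg fun x => sq_nonneg _
  have key : ∀ t : ℝ, 0 ≤ A + 2 * t * B + t ^ 2 * C := by
    intro t
    have hpos : (0:ℝ) ≤ ∫ x, (f x + t * g x) ^ 2 ∂μ := integral_nonneg fun x => sq_nonneg _
    have i1 : Integrable (fun x => 2 * t * (f x * g x) + t ^ 2 * g x ^ 2) μ :=
      (hfg.const_mul _).add (hg.const_mul _)
    have i2 : Integrable (fun x => 2 * t * (f x * g x)) μ := hfg.const_mul _
    have i3 : Integrable (fun x => t ^ 2 * g x ^ 2) μ := hg.const_mul _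
    have hexp : ∫ x, (f x + t * g x) ^ 2 ∂μ = A + 2 * t * B + t ^ 2 * C := by
      have h1 : ∀ x : α, (f x + t * g x) ^ 2
          = f x ^ 2 + (2 * t * (f x * g x) + t ^ 2 * g x ^ 2) := by intro x; ring
      simp_rw [h1]
      rw [integral_add hf i1, integral_add i2 i3, integral_const_mul, integral_const_mul]
      ring
    linarith [hexp ▸ hpos]
  have hBsq : B ^ 2 ≤ A * C := by
    rcases eq_or_ne B 0 with hB0 | hB0
    · rw [hB0]; simpa using mul_nonneg hA0 hC0
    rcases eq_or_lt_of_le hC0 with h | h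
    · have h1 := key (-(A + 1) / (2 * B))
      have h4 : 2 * (-(A + 1) / (2 * B)) * B = -(A + 1) := by field_simp
      rw [h4, ← h] at h1
      simp at h1
      linarith
    · have h1 := key (-(B / C))
      have h3 : 0 ≤ (A + 2 * (-(B / C)) * B + (-(B / C)) ^ 2 * C) * C := mul_nonneg h1 h.le
      have h4 : (A + 2 * (-(B / C)) * B + (-(B / C)) ^ 2 * C) * C = A * C - B ^ 2 := by
        field_simp; ring
      linarith [h4 ▸ h3]
  calc B ≤ |B| := le_abs_self _
    _ = Real.sqrt (B ^ 2) := (Real.sqrt_sq_eq_abs B).symm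
    _ ≤ Real.sqrt (A * C) := Real.sqrt_le_sqrt hBsq
    _ = Real.sqrt A * Real.sqrt C := Real.sqrt_mul hA0 _

lemma l2_triangle {f g : α → ℝ}
    (hfm : AEStronglyMeasurable f μ) (hgm : AEStronglyMeasurable g μ)
    (hf : Integrable (fun x => f x ^ 2) μ) (hg : Integrable (fun x => g x ^ 2) μ) :
    Real.sqrt (∫ x, (f x + g x) ^ 2 ∂μ)
      ≤ Real.sqrt (∫ x, f x ^ 2 ∂μ) + Real.sqrt (∫ x, g x ^ 2 ∂μ) := by
  have hfg := integrable_mul_of_sq hfm hgm hf hg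
  have hA0 : 0 ≤ ∫ x, f x ^ 2 ∂μ := integral_nonneg fun x => sq_nonneg _
  have hC0 : 0 ≤ ∫ x, g x ^ 2 ∂μ := integral_nonneg fun x => sq_nonneg _
  have hcs := integral_cs hfm hgm hf hg
  have i1 : Integrable (fun x => 2 * (f x * g x) + g x ^ 2) μ := (hfg.const_mul _).add hg
  have i2 : Integrable (fun x => 2 * (f x * g x)) μ := hfg.const_mul _
  have hexp : ∫ x, (f x + g x) ^ 2 ∂μ
      = (∫ x, f x ^ 2 ∂μ) + 2 * (∫ x, f x * g x ∂μ) + ∫ x, g x ^ 2 ∂μ := by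
    have h1 : ∀ x : α, (f x + g x) ^ 2 = f x ^ 2 + (2 * (f x * g x) + g x ^ 2) := fun x => by ring
    simp_rw [h1]
    rw [integral_add hf i1, integral_add i2 hg, integral_const_mul]
    ring
  rw [hexp]
  have hle : (∫ x, f x ^ 2 ∂μ) + 2 * (∫ x, f x * g x ∂μ) + (∫ x, g x ^ 2 ∂μ)
      ≤ (Real.sqrt (∫ x, f x ^ 2 ∂μ) + Real.sqrt (∫ x, g x ^ 2 ∂μ)) ^ 2 := by
    have h1 := Real.sq_sqrt hA0
    have h2 := Real.sq_sqrt hC0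
    nlinarith
  calc Real.sqrt _ ≤ Real.sqrt ((Real.sqrt (∫ x, f x ^ 2 ∂μ) + Real.sqrt (∫ x, g x ^ 2 ∂μ)) ^ 2) :=
        Real.sqrt_le_sqrt hle
    _ = _ := Real.sqrt_sq (by positivity)

lemma horthkey (A B : ℝ) (hA : 0 ≤ A) (key : ∀ t : ℝ, 0 ≤ t ^ 2 * A - 2 * t * B) : B = 0 := by
  have h1 := key (B / (A + 1))
  have hA1 : (0:ℝ) < A + 1 := by linarith
  have h3 : ((B / (A + 1)) ^ 2 * A - 2 * (B / (A + 1)) * B) * (A + 1) ^ 2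
      = B ^ 2 * A - 2 * B ^ 2 * (A + 1) := by field_simp
  have h4 : 0 ≤ B ^ 2 * A - 2 * B ^ 2 * (A + 1) := by
    calc (0:ℝ) ≤ ((B / (A + 1)) ^ 2 * A - 2 * (B / (A + 1)) * B) * (A + 1) ^ 2 :=
          mul_nonneg h1 (by positivity)
      _ = _ := h3
  have hB2 : B ^ 2 ≤ 0 := by nlinarith
  have hB0 : B ^ 2 = 0 := le_antisymm hB2 (sq_nonneg B)
  exact pow_eq_zero_iff two_ne_zero |>.mp hB0

end Aux

/-- **Deterministic error bound under the norm equivalence**: if the points `x^1,…,x^m` satisfy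
`(1/2)‖v‖² ≤ ‖v‖_m² ≤ (3/2)‖v‖²` for all `v ∈ V`, then for every `u` with
`‖√w u‖_∞ < ∞`, any weighted least-squares estimator `u_W` satisfies
`‖u − u_W‖ ≤ (1 + √2) e_{n,∞,w}(u)`. -/
theorem wls_error_bound_of_norm_equivalence {d : ℕ} (X : Set (EuclideanSpace ℝ (Fin d)))
    (hX : MeasurableSet X) (ρ : Measure X) [IsProbabilityMeasure ρ]
    (ψ : ℕ → X → ℝ) (hψmeas : ∀ i, Measurable (ψ i))
    (horth : ∀ i j, ∫ x, ψ i x * ψ j x ∂ρ = if i = j then (1 : ℝ) else 0)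
    (n m : ℕ) (hn : 1 ≤ n) (hm : 1 ≤ m)
    (hnd : ∀ x : X, ∃ j < n, ψ j x ≠ 0)
    (xs : Fin m → X)
    -- the norm equivalence on V:
    (hequiv : ∀ c : Fin n → ℝ,
      (1 / 2) * (∫ x, (∑ i : Fin n, c i * ψ i x) ^ 2 ∂ρ) ≤
          discNormSq n m ψ xs (fun x => ∑ i : Fin n, c i * ψ i x) ∧
        discNormSq n m ψ xs (fun x => ∑ i : Fin n, c i * ψ i x) ≤
          (3 / 2) * ∫ x, (∑ i : Fin n, c i * ψ i x) ^ 2 ∂ρ)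
    (u : X → ℝ) (humeas : Measurable u)
    (hbound : ∃ C : ℝ, ∀ y : X, Real.sqrt (wfun n ψ y) * |u y| ≤ C)
    -- `cW` are the coefficients of a weighted least-squares estimator `u_W`:
    (cW : Fin n → ℝ)
    (hcW : ∀ c : Fin n → ℝ,
      discNormSq n m ψ xs (fun x => u x - ∑ i : Fin n, cW i * ψ i x) ≤
        discNormSq n m ψ xs (fun x => u x - ∑ i : Fin n, c i * ψ i x)) :
    l2Norm ρ (fun x => u x - ∑ i : Fin n, cW i * ψ i x) ≤
      (1 + Real.sqrt 2) * bestEInfW n ψ u := by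
    classical
  obtain ⟨C, hC⟩ := hbound
  have hnpos : (0:ℝ) < n := by exact_mod_cast hn
  have hmpos : (0:ℝ) < m := by exact_mod_cast hm
  -- the quantity Q x = ∑_{i<n} ψ i x ^ 2
  set Q : X → ℝ := fun x => ∑ i ∈ Finset.range n, ψ i x ^ 2 with hQdef
  have hQpos : ∀ x : X, 0 < Q x := by
    intro x
    obtain ⟨j, hj, hjne⟩ := hnd x
    have h1 : (0:ℝ) < ψ j x ^ 2 := by positivity
    exact lt_of_lt_of_le h1 (Finset.single_le_sum (f := fun i => ψ i x ^ 2)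
      (fun i _ => sq_nonneg _) (Finset.mem_range.mpr hj))
  have hwQ : ∀ y : X, wfun n ψ y = n / Q y := fun y => rfl
  have hwpos : ∀ y : X, 0 < wfun n ψ y := fun y => by
    rw [hwQ]; exact div_pos hnpos (hQpos y)
  have hwnn : ∀ y : X, 0 ≤ wfun n ψ y := fun y => (hwpos y).le
  have hneX : Nonempty X := by
    by_contra h
    rw [not_nonempty_iff] at h
    have h1 : ρ Set.univ = 1 := measure_univ
    rw [Set.univ_eq_empty_iff.mpr h, measure_empty] at h1
    exact zero_ne_one h1
  -- integrability of ψ i ^ 2 and Q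
  have hψsq : ∀ i, Integrable (fun x => ψ i x ^ 2) ρ := by
    intro i
    by_contra h
    have h1 := horth i i
    rw [if_pos rfl] at h1
    have h2 : ¬ Integrable (fun x => ψ i x * ψ i x) ρ := by
      simpa [pow_two] using h
    rw [integral_undef h2] at h1
    exact one_ne_zero h1.symm
  have hQint : Integrable Q ρ := by
    rw [hQdef]
    exact integrable_finset_sum _ fun i _ => hψsq i
  have hQintval : ∫ x, Q x ∂ρ = n := by
    rw [hQdef]
    rw [integral_finset_sum _ fun i _ => hψsq i]
    have h1 : ∀ i ∈ Finset.range n, ∫ x, ψ i x ^ 2 ∂ρ = 1 := by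
      intro i _
      have h2 := horth i i
      rw [if_pos rfl] at h2
      simpa [pow_two] using h2
    rw [Finset.sum_congr rfl h1]
    simp
  -- measurability of elements of V
  have hvmeas : ∀ c : Fin n → ℝ, Measurable (fun x => ∑ i : Fin n, c i * ψ i x) :=
    fun c => Finset.measurable_sum _ fun i _ => (hψmeas i).const_mul (c i)
  -- finite Cauchy-Schwarz
  have hCSfin : ∀ (c : Fin n → ℝ) (y : X),
      (∑ i : Fin n, c i * ψ i y) ^ 2 ≤ (∑ i : Fin n, c i ^ 2) * Q y := by
    intro c y
    have h1 := Finset.sum_mul_sq_le_sq_mul_sq Finset.univ c (fun i : Fin n => ψ (i : ℕ) y)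
    have h2 : (∑ i : Fin n, ψ (i : ℕ) y ^ 2) = Q y :=
      Fin.sum_univ_eq_sum_range (fun i => ψ i y ^ 2) n
    rw [h2] at h1
    exact h1
  -- pointwise bound on √w |v_c|
  have hsqw : ∀ (c : Fin n → ℝ) (y : X),
      Real.sqrt (wfun n ψ y) * |∑ i : Fin n, c i * ψ i y|
        ≤ Real.sqrt n * Real.sqrt (∑ i : Fin n, c i ^ 2) := by
    intro c y
    calc Real.sqrt (wfun n ψ y) * |∑ i : Fin n, c i * ψ i y|
        ≤ Real.sqrt (wfun n ψ y) * Real.sqrt ((∑ i : Fin n, c i ^ 2) * Q y) :=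
          mul_le_mul_of_nonneg_left (Real.abs_le_sqrt (hCSfin c y)) (Real.sqrt_nonneg _)
      _ = Real.sqrt (wfun n ψ y * ((∑ i : Fin n, c i ^ 2) * Q y)) :=
          (Real.sqrt_mul (hwnn y) _).symm
      _ = Real.sqrt ((n : ℝ) * ∑ i : Fin n, c i ^ 2) := by
          rw [hwQ y]
          congr 1
          field_simp [(hQpos y).ne']
      _ = Real.sqrt n * Real.sqrt (∑ i : Fin n, c i ^ 2) := Real.sqrt_mul hnpos.le _
  -- the sup is well-defined
  have hbddS : ∀ c : Fin n → ℝ, BddAbove (Set.range fun y : X =>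
      Real.sqrt (wfun n ψ y) * |u y - ∑ i : Fin n, c i * ψ i y|) := by
    intro c
    refine ⟨C + Real.sqrt n * Real.sqrt (∑ i : Fin n, c i ^ 2), ?_⟩
    rintro _ ⟨y, rfl⟩
    have habs : |u y - ∑ i : Fin n, c i * ψ i y| ≤ |u y| + |∑ i : Fin n, c i * ψ i y| := by
      rw [sub_eq_add_neg]
      simpa using abs_add_le (u y) (-(∑ i : Fin n, c i * ψ i y))
    calc Real.sqrt (wfun n ψ y) * |u y - ∑ i : Fin n, c i * ψ i y|
        ≤ Real.sqrt (wfun n ψ y) * (|u y| + |∑ i : Fin n, c i * ψ i y|) :=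
          mul_le_mul_of_nonneg_left habs (Real.sqrt_nonneg _)
      _ = Real.sqrt (wfun n ψ y) * |u y| + Real.sqrt (wfun n ψ y) * |∑ i : Fin n, c i * ψ i y| :=
          mul_add _ _ _
      _ ≤ C + Real.sqrt n * Real.sqrt (∑ i : Fin n, c i ^ 2) := add_le_add (hC y) (hsqw c y)
  set S : (Fin n → ℝ) → ℝ := fun c => ⨆ y : X,
    Real.sqrt (wfun n ψ y) * |u y - ∑ i : Fin n, c i * ψ i y| with hSdef
  have hSle : ∀ (c : Fin n → ℝ) (y : X),
      Real.sqrt (wfun n ψ y) * |u y - ∑ i : Fin n, c i * ψ i y| ≤ S c :=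
    fun c y => le_ciSup (hbddS c) y
  have hSnn : ∀ c : Fin n → ℝ, 0 ≤ S c := by
    intro c
    refine le_trans ?_ (hSle c (Classical.arbitrary X))
    positivity
  -- pointwise bounds
  have hwdsq : ∀ (c : Fin n → ℝ) (y : X),
      wfun n ψ y * (u y - ∑ i : Fin n, c i * ψ i y) ^ 2 ≤ S c ^ 2 := by
    intro c y
    have h1 : (Real.sqrt (wfun n ψ y) * |u y - ∑ i : Fin n, c i * ψ i y|) ^ 2 ≤ S c ^ 2 :=
      pow_le_pow_left₀ (by positivity) (hSle c y) 2
    calc wfun n ψ y * (u y - ∑ i : Fin n, c i * ψ i y) ^ 2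
        = (Real.sqrt (wfun n ψ y) * |u y - ∑ i : Fin n, c i * ψ i y|) ^ 2 := by
          rw [mul_pow, Real.sq_sqrt (hwnn y), sq_abs]
      _ ≤ S c ^ 2 := h1
  have hptsq : ∀ (c : Fin n → ℝ) (y : X),
      (u y - ∑ i : Fin n, c i * ψ i y) ^ 2 ≤ S c ^ 2 / n * Q y := by
    intro c y
    have h2 := hwdsq c y
    rw [hwQ y, div_mul_eq_mul_div, div_le_iff₀ (hQpos y)] at h2
    rw [div_mul_eq_mul_div, le_div_iff₀ hnpos]
    nlinarith
  -- integrability helper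
  have hdom : ∀ (F : X → ℝ) (K : ℝ), Measurable F → (∀ y : X, F y ^ 2 ≤ K * Q y) →
      Integrable (fun x => F x ^ 2) ρ := by
    intro F K hFm hFK
    refine (hQint.const_mul K).mono ((hFm.pow_const 2).aestronglyMeasurable)
      (Filter.Eventually.of_forall fun y => ?_)
    rw [Real.norm_eq_abs, Real.norm_eq_abs, abs_of_nonneg (sq_nonneg _)]
    exact (hFK y).trans (le_abs_self _)
  have hf2int : ∀ c : Fin n → ℝ, Integrable (fun x => (u x - ∑ i : Fin n, c i * ψ i x) ^ 2) ρ :=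
    fun c => hdom _ (S c ^ 2 / n) (humeas.sub (hvmeas c)) (hptsq c)
  have hg2int : ∀ c : Fin n → ℝ, Integrable (fun x => (∑ i : Fin n, c i * ψ i x) ^ 2) ρ :=
    fun c => hdom _ (∑ i : Fin n, c i ^ 2) (hvmeas c) (hCSfin c)
  -- continuous bound
  have hintval : ∀ c : Fin n → ℝ, ∫ x, (u x - ∑ i : Fin n, c i * ψ i x) ^ 2 ∂ρ ≤ S c ^ 2 := by
    intro c
    have hmono := integral_mono (hf2int c) (hQint.const_mul (S c ^ 2 / n)) (fun y => hptsq c y)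
    rw [integral_const_mul, hQintval] at hmono
    calc ∫ x, (u x - ∑ i : Fin n, c i * ψ i x) ^ 2 ∂ρ ≤ S c ^ 2 / n * n := hmono
      _ = S c ^ 2 := div_mul_cancel₀ _ hnpos.ne'
  -- discrete facts
  have hDnn : ∀ f : X → ℝ, 0 ≤ discNormSq n m ψ xs f := by
    intro f
    exact mul_nonneg (by positivity)
      (Finset.sum_nonneg fun j _ => mul_nonneg (hwnn _) (sq_nonneg _))
  have hDle : ∀ c : Fin n → ℝ,
      discNormSq n m ψ xs (fun x => u x - ∑ i : Fin n, c i * ψ i x) ≤ S c ^ 2 := by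
    intro c
    unfold discNormSq
    calc (1 / (m:ℝ)) * ∑ j : Fin m, wfun n ψ (xs j) * (u (xs j) - ∑ i : Fin n, c i * ψ i (xs j)) ^ 2
        ≤ (1 / (m:ℝ)) * ∑ j : Fin m, S c ^ 2 :=
          mul_le_mul_of_nonneg_left (Finset.sum_le_sum fun j _ => hwdsq c (xs j)) (by positivity)
      _ = S c ^ 2 := by
          rw [Finset.sum_const, Finset.card_univ, Fintype.card_fin, nsmul_eq_mul]
          field_simp
  -- expansion of the discrete seminorm
  have hDexp : ∀ (F G : X → ℝ) (t : ℝ),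
      discNormSq n m ψ xs (fun x => F x + t * G x)
        = discNormSq n m ψ xs F
          + 2 * t * ((1 / (m:ℝ)) * ∑ j : Fin m, wfun n ψ (xs j) * (F (xs j) * G (xs j)))
          + t ^ 2 * discNormSq n m ψ xs G := by
    intro F G t
    simp only [discNormSq]
    have hterm : ∀ j : Fin m, wfun n ψ (xs j) * (F (xs j) + t * G (xs j)) ^ 2
        = wfun n ψ (xs j) * F (xs j) ^ 2
          + (2 * t) * (wfun n ψ (xs j) * (F (xs j) * G (xs j)))
          + t ^ 2 * (wfun n ψ (xs j) * G (xs j) ^ 2) := fun j => by ring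
    simp_rw [hterm, Finset.sum_add_distrib, ← Finset.mul_sum]
    ring
  -- linearity of sums
  have hsum_add : ∀ (a e : Fin n → ℝ) (t : ℝ) (x : X),
      (∑ i : Fin n, (a i + t * e i) * ψ i x)
        = (∑ i : Fin n, a i * ψ i x) + t * ∑ i : Fin n, e i * ψ i x := by
    intro a e t x
    rw [Finset.mul_sum, ← Finset.sum_add_distrib]
    exact Finset.sum_congr rfl fun i _ => by ring
  have hsum_sub : ∀ (a b : Fin n → ℝ) (x : X),
      (∑ i : Fin n, (a i - b i) * ψ i x)
        = (∑ i : Fin n, a i * ψ i x) - ∑ i : Fin n, b i * ψ i x := by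
    intro a b x
    rw [← Finset.sum_sub_distrib]
    exact Finset.sum_congr rfl fun i _ => by ring
  -- orthogonality of the residual in the discrete inner product
  have horthm : ∀ e : Fin n → ℝ,
      (1 / (m:ℝ)) * ∑ j : Fin m, wfun n ψ (xs j) *
        ((u (xs j) - ∑ i : Fin n, cW i * ψ i (xs j)) * (∑ i : Fin n, e i * ψ i (xs j))) = 0 := by
    intro e
    refine horthkey (discNormSq n m ψ xs (fun x => ∑ i : Fin n, e i * ψ i x)) _ (hDnn _) ?_
    intro t
    have h := hcW (fun i => cW i + t * e i)
    have heq : (fun x => u x - ∑ i : Fin n, (cW i + t * e i) * ψ i x)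
        = (fun x => (u x - ∑ i : Fin n, cW i * ψ i x) + (-t) * ∑ i : Fin n, e i * ψ i x) := by
      funext x
      rw [hsum_add cW e t x]
      ring
    have hexp2 := hDexp (fun x => u x - ∑ i : Fin n, cW i * ψ i x)
      (fun x => ∑ i : Fin n, e i * ψ i x) (-t)
    rw [heq, hexp2] at h
    nlinarith [h]
  -- discrete Pythagoras
  have hPyth : ∀ c : Fin n → ℝ,
      discNormSq n m ψ xs (fun x => ∑ i : Fin n, (c i - cW i) * ψ i x)
        ≤ discNormSq n m ψ xs (fun x => u x - ∑ i : Fin n, c i * ψ i x) := by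
    intro c
    have heq : (fun x => u x - ∑ i : Fin n, c i * ψ i x)
        = (fun x => (u x - ∑ i : Fin n, cW i * ψ i x)
          + (-1 : ℝ) * ∑ i : Fin n, (c i - cW i) * ψ i x) := by
      funext x
      rw [hsum_sub c cW x]
      ring
    have hexp2 := hDexp (fun x => u x - ∑ i : Fin n, cW i * ψ i x)
      (fun x => ∑ i : Fin n, (c i - cW i) * ψ i x) (-1)
    have h3 := horthm (fun i => c i - cW i)
    calc discNormSq n m ψ xs (fun x => ∑ i : Fin n, (c i - cW i) * ψ i x)
        ≤ discNormSq n m ψ xs (fun x => u x - ∑ i : Fin n, cW i * ψ i x)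
          + discNormSq n m ψ xs (fun x => ∑ i : Fin n, (c i - cW i) * ψ i x) :=
          le_add_of_nonneg_left (hDnn _)
      _ = discNormSq n m ψ xs (fun x => u x - ∑ i : Fin n, c i * ψ i x) := by
          rw [heq, hexp2, h3]
          ring
  -- the non-discrete part of the Pythagoras argument
  have hg2 : ∀ c : Fin n → ℝ,
      ∫ x, (∑ i : Fin n, (c i - cW i) * ψ i x) ^ 2 ∂ρ ≤ 2 * S c ^ 2 := by
    intro c
    have he := (hequiv (fun i => c i - cW i)).1
    have h1 := hPyth c
    have h2 := hDle c
    linarith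
  -- main estimate per c
  have hmain : ∀ c : Fin n → ℝ,
      l2Norm ρ (fun x => u x - ∑ i : Fin n, cW i * ψ i x) ≤ (1 + Real.sqrt 2) * S c := by
    intro c
    have hfm : AEStronglyMeasurable (fun x => u x - ∑ i : Fin n, c i * ψ i x) ρ :=
      (humeas.sub (hvmeas c)).aestronglyMeasurable
    have hgm : AEStronglyMeasurable (fun x => ∑ i : Fin n, (c i - cW i) * ψ i x) ρ :=
      (hvmeas _).aestronglyMeasurable
    have htri := l2_triangle (μ := ρ) hfm hgm (hf2int c) (hg2int (fun i => c i - cW i))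
    have hptw : ∀ x : X, (u x - ∑ i : Fin n, c i * ψ i x)
        + (∑ i : Fin n, (c i - cW i) * ψ i x) = u x - ∑ i : Fin n, cW i * ψ i x := by
      intro x
      rw [hsum_sub c cW x]
      ring
    simp_rw [hptw] at htri
    have ht1 : Real.sqrt (∫ x, (u x - ∑ i : Fin n, c i * ψ i x) ^ 2 ∂ρ) ≤ S c :=
      (Real.sqrt_le_sqrt (hintval c)).trans_eq (Real.sqrt_sq (hSnn c))
    have ht2 : Real.sqrt (∫ x, (∑ i : Fin n, (c i - cW i) * ψ i x) ^ 2 ∂ρ)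
        ≤ Real.sqrt 2 * S c := by
      calc Real.sqrt (∫ x, (∑ i : Fin n, (c i - cW i) * ψ i x) ^ 2 ∂ρ)
          ≤ Real.sqrt (2 * S c ^ 2) := Real.sqrt_le_sqrt (hg2 c)
        _ = Real.sqrt 2 * Real.sqrt (S c ^ 2) := Real.sqrt_mul (by norm_num) _
        _ = Real.sqrt 2 * S c := by rw [Real.sqrt_sq (hSnn c)]
    calc l2Norm ρ (fun x => u x - ∑ i : Fin n, cW i * ψ i x)
        = Real.sqrt (∫ x, (u x - ∑ i : Fin n, cW i * ψ i x) ^ 2 ∂ρ) := rfl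
      _ ≤ Real.sqrt (∫ x, (u x - ∑ i : Fin n, c i * ψ i x) ^ 2 ∂ρ)
          + Real.sqrt (∫ x, (∑ i : Fin n, (c i - cW i) * ψ i x) ^ 2 ∂ρ) := htri
      _ ≤ S c + Real.sqrt 2 * S c := add_le_add ht1 ht2
      _ = (1 + Real.sqrt 2) * S c := by ring
  -- conclusion
  have hpos : (0:ℝ) < 1 + Real.sqrt 2 := by positivity
  have hbest : bestEInfW n ψ u = ⨅ c : Fin n → ℝ, S c := rfl
  have h1 : l2Norm ρ (fun x => u x - ∑ i : Fin n, cW i * ψ i x) / (1 + Real.sqrt 2)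
      ≤ ⨅ c : Fin n → ℝ, S c := by
    refine le_ciInf fun c => ?_
    rw [div_le_iff₀ hpos]
    exact (hmain c).trans_eq (mul_comm _ _)
  rw [hbest]
  exact (div_le_iff₀' hpos).mp h1
end
end
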